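/- Define T : C[l,r] → C[l,r] by T(φ)(t) = (1/(t−l))∫_l^t φ(x)dx for t ∈ (l,r] and T(φ)(l) = φ(l). Then T is a bounded linear operator with operator norm at most 1, its image contains C¹[l,r] and is dense in C[l,r], and the dual operator T* maps probability measures on [l,r] to probability measures on [l,r] injectively. -/

import Mathlib

open MeasureTheory

section Aux
open Set


noncomputable def Traw (l r : ℝ) (hlr : l ≤ r) (φ : C(Set.Icc l r, ℝ)) : ℝ → ℝ :=
  fun t => if l < t then (∫ x in Set.Icc l t, Set.IccExtend hlr φ x) / (t - l)
    else Set.IccExtend hlr φ l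

theorem Traw_key (l r : ℝ) (hlr : l ≤ r) (φ : C(Set.Icc l r, ℝ)) {t : ℝ} (ht : l < t) :
    Traw l r hlr φ t = (∫ x in l..t, Set.IccExtend hlr φ x) / (t - l) := by
  rw [Traw, if_pos ht, intervalIntegral.integral_of_le ht.le,
    ← MeasureTheory.integral_Icc_eq_integral_Ioc]

theorem Traw_cont (l r : ℝ) (hlr : l ≤ r) (φ : C(Set.Icc l r, ℝ)) :
    Continuous (Traw l r hlr φ) := by
  have hφc : Continuous (Set.IccExtend hlr φ) := φ.continuous.Icc_extend'
  have hInt : ∀ a b : ℝ, IntervalIntegrable (Set.IccExtend hlr φ) volume a b :=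
    fun a b => hφc.intervalIntegrable a b
  have hg : Continuous (fun t => ∫ x in l..t, Set.IccExtend hlr φ x) :=
    intervalIntegral.continuous_primitive hInt l
  rw [continuous_iff_continuousAt]
  intro t
  rcases lt_trichotomy l t with ht | ht | ht
  · have h1 : ContinuousAt (fun s => (∫ x in l..s, Set.IccExtend hlr φ x) / (s - l)) t :=
      hg.continuousAt.div (by fun_prop) (sub_ne_zero.2 ht.ne')
    exact h1.congr <| Filter.eventuallyEq_of_mem (Ioi_mem_nhds ht)
      (fun s hs => (Traw_key l r hlr φ hs).symm)
  · subst ht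
    rw [Metric.continuousAt_iff]
    intro ε hε
    obtain ⟨δ, hδ, hδ'⟩ := Metric.continuousAt_iff.mp hφc.continuousAt (ε/2) (half_pos hε)
    refine ⟨δ, hδ, fun {s} hs => ?_⟩
    have hTl : Traw l r hlr φ l = Set.IccExtend hlr φ l := if_neg (lt_irrefl l)
    by_cases hls : l < s
    · have hsl : s - l ≠ 0 := sub_ne_zero.2 hls.ne'
      have hdiff : Traw l r hlr φ s - Set.IccExtend hlr φ l
          = (∫ x in l..s, (Set.IccExtend hlr φ x - Set.IccExtend hlr φ l)) / (s - l) := by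
        rw [Traw_key l r hlr φ hls, intervalIntegral.integral_sub (hInt l s)
          intervalIntegrable_const, intervalIntegral.integral_const, sub_div, smul_eq_mul,
          mul_div_cancel_left₀ _ hsl]
      have hb : ‖∫ x in l..s, (Set.IccExtend hlr φ x - Set.IccExtend hlr φ l)‖
          ≤ (ε/2) * |s - l| := by
        apply intervalIntegral.norm_integral_le_of_norm_le_const
        intro x hx
        rw [Set.uIoc_of_le hls.le] at hx
        have hxl : dist x l < δ := by
          rw [Real.dist_eq, abs_of_pos (sub_pos.2 hx.1)]
          calc x - l ≤ s - l := by linarith [hx.2]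
          _ < δ := by rw [Real.dist_eq, abs_of_pos (sub_pos.2 hls)] at hs; exact hs
        exact (hδ' hxl).le
      rw [hTl, Real.dist_eq, hdiff, abs_div, abs_of_pos (sub_pos.2 hls)]
      calc _ ≤ ((ε/2) * |s - l|) / (s - l) := by
              gcongr
              · exact hb
        _ = ε/2 := by rw [abs_of_pos (sub_pos.2 hls)]; field_simp
        _ < ε := half_lt_self hε
    · have : Traw l r hlr φ s = Set.IccExtend hlr φ l := if_neg hls
      rw [this, hTl, dist_self]; exact hε
  · have h1 : ContinuousAt (fun _ : ℝ => Set.IccExtend hlr φ l) t := continuousAt_const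
    exact h1.congr <| Filter.eventuallyEq_of_mem (Iio_mem_nhds ht)
      (fun s hs => (if_neg (not_lt.2 (le_of_lt hs))).symm)
theorem IccExt_bound (l r : ℝ) (hlr : l ≤ r) (φ : C(Set.Icc l r, ℝ)) (x : ℝ) :
    ‖Set.IccExtend hlr φ x‖ ≤ ‖φ‖ := φ.norm_coe_le_norm _

theorem IccExt_intOn (l r : ℝ) (hlr : l ≤ r) (φ : C(Set.Icc l r, ℝ)) (a b : ℝ) :
    IntegrableOn (Set.IccExtend hlr φ) (Set.Icc a b) volume :=
  (φ.continuous.Icc_extend').integrableOn_Icc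

theorem Traw_bound (l r : ℝ) (hlr : l ≤ r) (φ : C(Set.Icc l r, ℝ)) (t : ℝ) :
    ‖Traw l r hlr φ t‖ ≤ ‖φ‖ := by
  rw [Traw]
  split_ifs with ht
  · have h1 : ‖∫ x in Set.Icc l t, Set.IccExtend hlr φ x‖
        ≤ ‖φ‖ * (volume (Set.Icc l t)).toReal := by
      apply norm_setIntegral_le_of_norm_le_const
      · simp [Real.volume_Icc]
      · exact fun x _ => IccExt_bound l r hlr φ x
    rw [Real.volume_Icc, ENNReal.toReal_ofReal (by linarith)] at h1
    rw [norm_div, Real.norm_eq_abs (t - l), abs_of_pos (sub_pos.2 ht),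
      div_le_iff₀ (sub_pos.2 ht)]
    exact h1
  · exact IccExt_bound l r hlr φ l

noncomputable def TL (l r : ℝ) (hlr : l ≤ r) :
    C(Set.Icc l r, ℝ) →ₗ[ℝ] C(Set.Icc l r, ℝ) where
  toFun φ := ⟨fun t => Traw l r hlr φ t, (Traw_cont l r hlr φ).comp continuous_subtype_val⟩
  map_add' φ ψ := by
    ext t
    simp only [ContinuousMap.coe_mk, ContinuousMap.add_apply, Traw]
    split_ifs with ht
    · rw [show Set.IccExtend hlr ⇑(φ + ψ)
          = fun x => Set.IccExtend hlr φ x + Set.IccExtend hlr ψ x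
          from funext fun x => by simp [Set.IccExtend]]
      rw [integral_add (IccExt_intOn l r hlr φ l t) (IccExt_intOn l r hlr ψ l t), add_div]
    · simp [Set.IccExtend]
  map_smul' c φ := by
    ext t
    simp only [ContinuousMap.coe_mk, ContinuousMap.smul_apply, RingHom.id_apply, smul_eq_mul, Traw]
    split_ifs with ht
    · rw [show Set.IccExtend hlr ⇑(c • φ)
          = fun x => c • Set.IccExtend hlr φ x from funext fun x => by simp [Set.IccExtend]]
      rw [integral_smul, smul_eq_mul, mul_div_assoc]
    · simp [Set.IccExtend]

noncomputable def Tave (l r : ℝ) (hlr : l ≤ r) :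
    C(Set.Icc l r, ℝ) →L[ℝ] C(Set.Icc l r, ℝ) :=
  LinearMap.mkContinuous (TL l r hlr) 1 (by
    intro φ
    rw [one_mul]
    apply (ContinuousMap.norm_le _ (norm_nonneg φ)).2
    exact fun t => Traw_bound l r hlr φ t)

theorem Tave_norm_le (l r : ℝ) (hlr : l ≤ r) : ‖Tave l r hlr‖ ≤ 1 :=
  LinearMap.mkContinuous_norm_le _ zero_le_one _

theorem Tave_apply (l r : ℝ) (hlr : l ≤ r) (φ : C(Set.Icc l r, ℝ)) (t : Set.Icc l r) :
    Tave l r hlr φ t = Traw l r hlr φ t := rfl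

theorem Tave_apply_pos (l r : ℝ) (hlr : l ≤ r) (φ : C(Set.Icc l r, ℝ)) (t : Set.Icc l r)
    (ht : l < (t : ℝ)) :
    Tave l r hlr φ t = (∫ x in Set.Icc l (t : ℝ), Set.IccExtend hlr φ x) / ((t : ℝ) - l) :=
  if_pos ht

theorem Tave_apply_eq (l r : ℝ) (hlr : l ≤ r) (φ : C(Set.Icc l r, ℝ)) (t : Set.Icc l r)
    (ht : (t : ℝ) = l) : Tave l r hlr φ t = φ t := by
  rw [Tave_apply, Traw, if_neg (by rw [ht]; exact lt_irrefl l),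
    Set.IccExtend_of_mem hlr φ (Set.left_mem_Icc.2 hlr),
    show (⟨l, Set.left_mem_Icc.2 hlr⟩ : Set.Icc l r) = t from Subtype.ext ht.symm]

theorem range_contains_C1 (l r : ℝ) (hlr : l < r) (f : ℝ → ℝ)
    (hf : ContDiffOn ℝ 1 f (Set.Icc l r)) :
    ∃ φ : C(Set.Icc l r, ℝ), (∀ s : Set.Icc l r,
        φ s = f s + ((s:ℝ) - l) * derivWithin f (Set.Icc l r) s) ∧
      ∀ t : Set.Icc l r, l < (t:ℝ) →
        (∫ x in Set.Icc l (t:ℝ), Set.IccExtend hlr.le φ x) = ((t:ℝ) - l) * f t := by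
  set f' := derivWithin f (Set.Icc l r) with hf'
  have hf'c : ContinuousOn f' (Set.Icc l r) :=
    hf.continuousOn_derivWithin (uniqueDiffOn_Icc hlr) le_rfl
  have hφc : ContinuousOn (fun x => f x + (x - l) * f' x) (Set.Icc l r) :=
    hf.continuousOn.add ((continuousOn_id.sub continuousOn_const).mul hf'c)
  set φ : C(Set.Icc l r, ℝ) := ⟨(Set.Icc l r).restrict (fun x => f x + (x - l) * f' x),
    hφc.restrict⟩ with hφ
  refine ⟨φ, fun s => rfl, fun t ht => ?_⟩
  have hsub : Set.Icc l (t:ℝ) ⊆ Set.Icc l r := Set.Icc_subset_Icc le_rfl t.2.2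
  have hcong : ∫ x in Set.Icc l (t:ℝ), Set.IccExtend hlr.le φ x
      = ∫ x in Set.Icc l (t:ℝ), (f x + (x - l) * f' x) := by
    apply setIntegral_congr_fun measurableSet_Icc
    intro x hx
    rw [Set.IccExtend_of_mem hlr.le φ (hsub hx)]
    rfl
  rw [hcong, MeasureTheory.integral_Icc_eq_integral_Ioc,
    ← intervalIntegral.integral_of_le ht.le]
  have key : ∫ x in l..(t:ℝ), (f x + (x - l) * f' x)
      = (fun y => (y - l) * f y) (t:ℝ) - (fun y => (y - l) * f y) l := by
    apply intervalIntegral.integral_eq_sub_of_hasDeriv_right_of_le (f := fun y => (y - l) * f y)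
      ht.le
    · exact (continuousOn_id.sub continuousOn_const).mul (hf.continuousOn.mono hsub)
    · intro x hx
      have hxr : x < r := lt_of_lt_of_le hx.2 t.2.2
      have hmem : Set.Icc l r ∈ nhds x := Icc_mem_nhds hx.1 hxr
      have hd : DifferentiableAt ℝ f x :=
        ((hf.differentiableOn one_ne_zero).differentiableAt hmem)
      have hder : f' x = deriv f x := derivWithin_of_mem_nhds hmem
      have : HasDerivAt (fun y => (y - l) * f y)
          (1 * f x + (x - l) * deriv f x) x :=
        ((hasDerivAt_id x).sub_const l).mul hd.hasDerivAt
      rw [one_mul] at this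
      rw [hder]
      exact this.hasDerivWithinAt
    · apply ContinuousOn.intervalIntegrable
      rw [Set.uIcc_of_le ht.le]
      exact hφc.mono hsub
  rw [key]; simp

noncomputable def mker (l r : ℝ) (hlr : l ≤ r) : Set.Icc l r × ℝ → Set.Icc l r :=
  fun p => Set.projIcc l r hlr (l + p.2 * ((p.1 : ℝ) - l))

theorem mker_cont (l r : ℝ) (hlr : l ≤ r) : Continuous (mker l r hlr) :=
  continuous_projIcc.comp (by fun_prop)

theorem cm_integrable {Ω : Type*} [MeasurableSpace Ω] [TopologicalSpace Ω]
    [OpensMeasurableSpace Ω] (μ : Measure Ω) [IsFiniteMeasure μ] {f : Ω → ℝ}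
    (hc : Continuous f) (C : ℝ) (hC : ∀ x, ‖f x‖ ≤ C) : Integrable f μ :=
  (integrable_const C).mono' hc.aestronglyMeasurable (Filter.Eventually.of_forall hC)

theorem inner_eq (l r : ℝ) (hlr : l < r) (φ : C(Set.Icc l r, ℝ)) (t : Set.Icc l r) :
    ∫ u in Set.Icc (0:ℝ) 1, φ (mker l r hlr.le (t, u)) =
      if l < (t:ℝ) then (∫ x in Set.Icc l (t:ℝ), Set.IccExtend hlr.le φ x) / ((t:ℝ) - l)
      else φ t := by
  have hmk : ∀ u : ℝ, φ (mker l r hlr.le (t, u)) = Set.IccExtend hlr.le φ (l + u * ((t:ℝ) - l)) :=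
    fun u => rfl
  split_ifs with ht
  · have hc : (t:ℝ) - l ≠ 0 := sub_ne_zero.2 ht.ne'
    rw [MeasureTheory.integral_Icc_eq_integral_Ioc, ← intervalIntegral.integral_of_le zero_le_one]
    calc ∫ u in (0:ℝ)..1, φ (mker l r hlr.le (t, u))
        = ∫ u in (0:ℝ)..1, Set.IccExtend hlr.le φ (((t:ℝ) - l) * u + l) := by
          refine intervalIntegral.integral_congr fun u _ => ?_
          rw [hmk]; ring_nf
      _ = (((t:ℝ) - l))⁻¹ • ∫ x in (((t:ℝ)-l)*0+l)..(((t:ℝ)-l)*1+l), Set.IccExtend hlr.le φ x :=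
          intervalIntegral.integral_comp_mul_add _ hc l
      _ = (∫ x in Set.Icc l (t:ℝ), Set.IccExtend hlr.le φ x) / ((t:ℝ) - l) := by
          rw [mul_zero, zero_add, mul_one, sub_add_cancel, smul_eq_mul,
            intervalIntegral.integral_of_le (le_of_lt ht),
            ← MeasureTheory.integral_Icc_eq_integral_Ioc, inv_mul_eq_div]
  · have ht' : (t : ℝ) = l := le_antisymm (not_lt.1 ht) t.2.1
    have : ∀ u : ℝ, φ (mker l r hlr.le (t, u)) = φ t := by
      intro u
      rw [hmk, ht', sub_self, mul_zero, add_zero,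
        Set.IccExtend_of_mem hlr.le φ (Set.left_mem_Icc.2 hlr.le)]
      congr 1
      exact Subtype.ext ht'.symm
    simp only [this]
    rw [setIntegral_const]; simp [Measure.real, Real.volume_Icc]

theorem Tave_surjC1 (l r : ℝ) (hlr : l < r) (f : ℝ → ℝ)
    (hf : ContDiffOn ℝ 1 f (Set.Icc l r)) :
    ∃ φ : C(Set.Icc l r, ℝ), ∀ t : Set.Icc l r, Tave l r hlr.le φ t = f t := by
  obtain ⟨φ, hval, hint⟩ := range_contains_C1 l r hlr f hf
  refine ⟨φ, fun t => ?_⟩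
  by_cases ht : l < (t : ℝ)
  · rw [Tave_apply_pos _ _ _ _ _ ht, hint t ht,
      mul_div_cancel_left₀ _ (sub_ne_zero.2 ht.ne')]
  · have ht' : (t : ℝ) = l := le_antisymm (not_lt.1 ht) t.2.1
    rw [Tave_apply_eq _ _ _ _ _ ht', hval t, ht', sub_self, zero_mul, add_zero]

theorem poly_contDiff (p : Polynomial ℝ) : ContDiff ℝ 1 (fun x : ℝ => p.eval x) := by
  induction p using Polynomial.induction_on' with
  | add p q hp hq => simpa [Polynomial.eval_add] using hp.add hq
  | monomial n a =>
      simpa [Polynomial.eval_monomial] using (contDiff_const (c := a)).mul ((contDiff_id (𝕜 := ℝ)).pow n)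

theorem Tave_denseRange (l r : ℝ) (hlr : l < r) :
    DenseRange (⇑(Tave l r hlr.le) : C(Set.Icc l r, ℝ) → C(Set.Icc l r, ℝ)) := by
  have hsub : (polynomialFunctions (Set.Icc l r) : Set C(Set.Icc l r, ℝ))
      ⊆ Set.range ⇑(Tave l r hlr.le) := by
    intro ψ hψ
    rw [polynomialFunctions_coe] at hψ
    obtain ⟨p, rfl⟩ := hψ
    obtain ⟨φ, hφ⟩ := Tave_surjC1 l r hlr (fun x => p.eval x) (poly_contDiff p).contDiffOn
    exact ⟨φ, ContinuousMap.ext fun t => hφ t⟩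
  have h1 : closure (polynomialFunctions (Set.Icc l r) : Set C(Set.Icc l r, ℝ))
      ⊆ closure (Set.range ⇑(Tave l r hlr.le)) := closure_mono hsub
  rw [← Subalgebra.topologicalClosure_coe, polynomialFunctions_closure_eq_top l r] at h1
  rw [DenseRange, dense_iff_closure_eq]
  exact Set.eq_univ_of_univ_subset h1

theorem dual_exists (l r : ℝ) (hlr : l < r) (μ : Measure (Set.Icc l r))
    [IsProbabilityMeasure μ] :
    ∃ ν : Measure (Set.Icc l r), IsProbabilityMeasure ν ∧
      ∀ φ : C(Set.Icc l r, ℝ), (∫ t, Tave l r hlr.le φ t ∂μ) = ∫ t, φ t ∂ν := by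
  set P := volume.restrict (Set.Icc (0:ℝ) 1) with hPdef
  haveI hP : IsProbabilityMeasure P := ⟨by simp [hPdef, Real.volume_Icc]⟩
  have hm := mker_cont l r hlr.le
  set ν := (μ.prod P).map (mker l r hlr.le) with hν
  haveI hprob : IsProbabilityMeasure ν := Measure.isProbabilityMeasure_map hm.measurable.aemeasurable
  refine ⟨ν, hprob, fun φ => ?_⟩
  have hint : Integrable (fun p => φ (mker l r hlr.le p)) (μ.prod P) :=
    cm_integrable _ (φ.continuous.comp hm) ‖φ‖ (fun x => φ.norm_coe_le_norm _)
  calc ∫ t, Tave l r hlr.le φ t ∂μ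
      = ∫ t, ∫ u, φ (mker l r hlr.le (t, u)) ∂P ∂μ := by
        apply integral_congr_ae (Filter.Eventually.of_forall fun t => ?_)
        rw [hPdef, inner_eq l r hlr φ t]
        by_cases ht : l < (t : ℝ)
        · rw [if_pos ht, Tave_apply_pos _ _ _ _ _ ht]
        · rw [if_neg ht, Tave_apply_eq _ _ _ _ _ (le_antisymm (not_lt.1 ht) t.2.1)]
    _ = ∫ p, φ (mker l r hlr.le p) ∂(μ.prod P) := (integral_prod _ hint).symm
    _ = ∫ t, φ t ∂ν := by
        rw [hν, integral_map hm.measurable.aemeasurable φ.continuous.aestronglyMeasurable]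

theorem integral_cm_continuous (l r : ℝ) (μ : Measure (Set.Icc l r))
    [IsProbabilityMeasure μ] :
    Continuous (fun ψ : C(Set.Icc l r, ℝ) => ∫ t, ψ t ∂μ) := by
  apply LipschitzWith.continuous (K := 1)
  apply LipschitzWith.of_dist_le_mul
  intro ψ₁ ψ₂
  have h1 : Integrable (fun t => ψ₁ t) μ :=
    cm_integrable _ ψ₁.continuous ‖ψ₁‖ (fun x => ψ₁.norm_coe_le_norm _)
  have h2 : Integrable (fun t => ψ₂ t) μ :=
    cm_integrable _ ψ₂.continuous ‖ψ₂‖ (fun x => ψ₂.norm_coe_le_norm _)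
  rw [Real.dist_eq, ← integral_sub h1 h2]
  have hb : ∀ᵐ t ∂μ, ‖ψ₁ t - ψ₂ t‖ ≤ ‖ψ₁ - ψ₂‖ :=
    Filter.Eventually.of_forall fun t => (ψ₁ - ψ₂).norm_coe_le_norm t
  calc |∫ t, (ψ₁ t - ψ₂ t) ∂μ| ≤ ‖ψ₁ - ψ₂‖ * (μ Set.univ).toReal :=
        norm_integral_le_of_norm_le_const hb
    _ = 1 * dist ψ₁ ψ₂ := by
        rw [measure_univ, ENNReal.toReal_one, mul_one, one_mul, dist_eq_norm]

theorem measures_eq (l r : ℝ) (hlr : l < r)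
    (μ₁ μ₂ : Measure (Set.Icc l r)) [IsProbabilityMeasure μ₁] [IsProbabilityMeasure μ₂]
    (h : ∀ φ : C(Set.Icc l r, ℝ),
      (∫ t, Tave l r hlr.le φ t ∂μ₁) = ∫ t, Tave l r hlr.le φ t ∂μ₂) : μ₁ = μ₂ := by
  have hall : ∀ ψ : C(Set.Icc l r, ℝ), (∫ t, ψ t ∂μ₁) = ∫ t, ψ t ∂μ₂ := by
    have hclosed : IsClosed {ψ : C(Set.Icc l r, ℝ) | (∫ t, ψ t ∂μ₁) = ∫ t, ψ t ∂μ₂} :=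
      isClosed_eq (integral_cm_continuous l r μ₁) (integral_cm_continuous l r μ₂)
    have hsub : Set.range ⇑(Tave l r hlr.le)
        ⊆ {ψ : C(Set.Icc l r, ℝ) | (∫ t, ψ t ∂μ₁) = ∫ t, ψ t ∂μ₂} := by
      rintro _ ⟨φ, rfl⟩
      exact h φ
    have h2 := hclosed.closure_subset_iff.2 hsub
    rw [(Tave_denseRange l r hlr).closure_range] at h2
    exact fun ψ => h2 (Set.mem_univ ψ)
  apply ext_of_forall_lintegral_eq_of_IsFiniteMeasure
  intro f
  have hfc : Continuous (fun x : Set.Icc l r => (f x : ℝ)) :=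
    NNReal.continuous_coe.comp f.continuous
  rw [lintegral_coe_eq_integral _ (f.integrable_of_nnreal μ₁),
    lintegral_coe_eq_integral _ (f.integrable_of_nnreal μ₂)]
  exact congrArg ENNReal.ofReal (hall ⟨fun x => (f x : ℝ), hfc⟩)

end Aux

/-- the averaging operator `T(φ)(t) = (1/(t−l))∫_l^t φ`, `T(φ)(l) = φ(l)`, is a
bounded linear operator on `C[l,r]` of norm ≤ 1, its image contains `C¹[l,r]` and is dense,
and its dual maps probability measures to probability measures injectively. -/
theorem stmt8 (l r : ℝ) (hlr : l < r) :
    ∃ T : C(Set.Icc l r, ℝ) →L[ℝ] C(Set.Icc l r, ℝ),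
      (∀ (φ : C(Set.Icc l r, ℝ)) (t : Set.Icc l r),
          (l < (t : ℝ) →
            T φ t = (∫ x in Set.Icc l (t : ℝ), Set.IccExtend hlr.le φ x) / ((t : ℝ) - l))
          ∧ ((t : ℝ) = l → T φ t = φ t))
      ∧ ‖T‖ ≤ 1
      ∧ (∀ f : ℝ → ℝ, ContDiffOn ℝ 1 f (Set.Icc l r) →
          ∃ φ : C(Set.Icc l r, ℝ), ∀ t : Set.Icc l r, T φ t = f t)
      ∧ DenseRange (T : C(Set.Icc l r, ℝ) → C(Set.Icc l r, ℝ))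
      ∧ (∀ μ : Measure (Set.Icc l r), IsProbabilityMeasure μ →
          ∃ ν : Measure (Set.Icc l r), IsProbabilityMeasure ν ∧
            ∀ φ : C(Set.Icc l r, ℝ), (∫ t, T φ t ∂μ) = ∫ t, φ t ∂ν)
      ∧ (∀ μ₁ μ₂ : Measure (Set.Icc l r),
          IsProbabilityMeasure μ₁ → IsProbabilityMeasure μ₂ →
          (∀ φ : C(Set.Icc l r, ℝ), (∫ t, T φ t ∂μ₁) = ∫ t, T φ t ∂μ₂) → μ₁ = μ₂) := by
  refine ⟨Tave l r hlr.le, ?_, Tave_norm_le l r hlr.le, ?_, Tave_denseRange l r hlr, ?_, ?_⟩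
  · exact fun φ t => ⟨fun ht => Tave_apply_pos l r hlr.le φ t ht,
      fun ht => Tave_apply_eq l r hlr.le φ t ht⟩
  · exact fun f hf => Tave_surjC1 l r hlr f hf
  · intro μ hμ
    haveI := hμ
    exact dual_exists l r hlr μ
  · intro μ₁ μ₂ h₁ h₂ h
    haveI := h₁; haveI := h₂
    exact measures_eq l r hlr μ₁ μ₂ h
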